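/- For any vertex u ∈ V\R and landmark r ∈ R, there exist a landmark r' and an entry (r', δ_ur') ∈ L(u) such that δ_ur' + d_M(r', r) = d_G(u,r). In other words, distances from any vertex to any landmark can be exactly recovered from the path labelling together with meta-graph distances. -/
import Mathlib


open SimpleGraph

variable {V : Type}

/-- `(r, d_G(u,r))` is an entry of the path labelling `L(u)`: some shortest
`u`-`r` path meets the landmark set `R` only in `r`. -/
def LEntry (G : SimpleGraph V) (R : Set V) (u r : V) : Prop :=
  ∃ w : G.Walk u r, w.length = G.dist u r ∧ ∀ x ∈ w.support, x ∈ R → x = r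

/-- `(r, r')` is an edge of the meta-graph `M`: some shortest `r`-`r'` path in
`G` contains no landmark other than `r` and `r'`. Its weight is `d_G(r,r')`. -/
def MEdge (G : SimpleGraph V) (R : Set V) (r r' : V) : Prop :=
  r ≠ r' ∧ ∃ w : G.Walk r r', w.length = G.dist r r' ∧
    ∀ x ∈ w.support, x ∈ R → x = r ∨ x = r'

/-- There is a walk in the weighted meta-graph from `r` to `r'` of total
weight `n` (each meta-edge `(s,s')` having weight `d_G(s,s')`). -/
inductive MWalkLen (G : SimpleGraph V) (R : Set V) : V → V → ℕ → Prop
  | nil (r : V) : MWalkLen G R r r 0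
  | cons {r r' r'' : V} {n : ℕ} (h : MEdge G R r r') (hw : MWalkLen G R r' r'' n) :
      MWalkLen G R r r'' (G.dist r r' + n)

/-- Weighted shortest-path distance `d_M` in the meta-graph (`⊤` if unreachable). -/
noncomputable def dM (G : SimpleGraph V) (R : Set V) (r r' : V) : ℕ∞ :=
  sInf {x : ℕ∞ | ∃ n : ℕ, MWalkLen G R r r' n ∧ x = (n : ℕ∞)}

/-- The sketch upper bound
`d⊤_uv = min {δ_ur + d_M(r,r') + δ_vr' : (r,δ_ur) ∈ L(u), (r',δ_vr') ∈ L(v)}`. -/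
noncomputable def dTop (G : SimpleGraph V) (R : Set V) (u v : V) : ℕ∞ :=
  sInf {x : ℕ∞ | ∃ r r', r ∈ R ∧ r' ∈ R ∧ LEntry G R u r ∧ LEntry G R v r' ∧
    x = (G.dist u r : ℕ∞) + dM G R r r' + (G.dist v r' : ℕ∞)}

/-- Concatenation of meta-walks. -/
lemma mwalk_append {G : SimpleGraph V} {R : Set V} {a b c : V} {m n : ℕ}
    (h1 : MWalkLen G R a b m) : MWalkLen G R b c n → MWalkLen G R a c (m + n) := by
  induction h1 with
  | nil => intro h2; simpa using h2
  | cons h hw ih => intro h2; rw [add_assoc]; exact .cons h (ih h2)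

/-- Meta-walk weight dominates graph distance. -/
lemma dist_le_of_mwalk {G : SimpleGraph V} (hG : G.Connected) {R : Set V} {a b : V} {n : ℕ}
    (h : MWalkLen G R a b n) : G.dist a b ≤ n := by
  induction h with
  | nil => simp
  | @cons r r' r'' k h hw ih =>
      calc G.dist r r'' ≤ G.dist r r' + G.dist r' r'' := hG.dist_triangle
        _ ≤ G.dist r r' + k := by omega

/-- A shortest walk between two landmarks yields a meta-walk of the same weight. -/
lemma mwalk_of_shortest {G : SimpleGraph V} (hG : G.Connected) {R : Set V} :
    ∀ n (s r : V) (w : G.Walk s r), w.length = n → w.length = G.dist s r →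
      s ∈ R → r ∈ R → MWalkLen G R s r n := by
  classical
  intro n
  induction n using Nat.strong_induction_on with
  | _ n ih =>
  intro s r w hn hw hs hr
  by_cases hsr : s = r
  · subst hsr
    have h0 : n = 0 := by rw [← hn, hw, dist_self]
    subst h0; exact .nil s
  by_cases hint : ∀ x ∈ w.support, x ∈ R → x = s ∨ x = r
  · have edge : MEdge G R s r := ⟨hsr, w, hw, hint⟩
    have hmw := MWalkLen.cons edge (MWalkLen.nil r)
    have hdn : G.dist s r + 0 = n := by omega
    rwa [hdn] at hmw
  · push_neg at hint
    obtain ⟨t, htsupp, htR, hne⟩ := hint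
    have hts : s ≠ t := fun h => hne.1 h.symm
    have htr : t ≠ r := hne.2
    have hsum : (w.takeUntil t htsupp).length + (w.dropUntil t htsupp).length = w.length := by
      rw [← Walk.length_append, Walk.take_spec]
    have d1 : G.dist s t ≤ (w.takeUntil t htsupp).length := dist_le _
    have d2 : G.dist t r ≤ (w.dropUntil t htsupp).length := dist_le _
    have tri : G.dist s r ≤ G.dist s t + G.dist t r := hG.dist_triangle
    have l1 : (w.takeUntil t htsupp).length ≠ 0 :=
      fun h => hts (Walk.eq_of_length_eq_zero h)
    have l2 : (w.dropUntil t htsupp).length ≠ 0 :=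
      fun h => htr (Walk.eq_of_length_eq_zero h)
    have e1 : (w.takeUntil t htsupp).length = G.dist s t := by omega
    have e2 : (w.dropUntil t htsupp).length = G.dist t r := by omega
    have m1 : MWalkLen G R s t (w.takeUntil t htsupp).length :=
      ih _ (by omega) s t _ rfl e1 hs htR
    have m2 : MWalkLen G R t r (w.dropUntil t htsupp).length :=
      ih _ (by omega) t r _ rfl e2 htR hr
    have := mwalk_append m1 m2
    rwa [hsum, hn] at this

/-- Along any walk ending in a landmark there is a "first" landmark, and the walk
splits there. -/
lemma exists_first_landmark {G : SimpleGraph V} {R : Set V} {a b : V}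
    (w : G.Walk a b) (hb : b ∈ R) :
    ∃ t ∈ R, ∃ w1 : G.Walk a t, (∀ x ∈ w1.support, x ∈ R → x = t) ∧
      ∃ w2 : G.Walk t b, w1.length + w2.length = w.length := by
  induction w with
  | nil => exact ⟨_, hb, .nil, by simp, .nil, rfl⟩
  | @cons a c b h p ih =>
    by_cases ha : a ∈ R
    · exact ⟨a, ha, .nil, by simp, .cons h p, by simp⟩
    · obtain ⟨t, ht, w1, hsupp, w2, hlen⟩ := ih hb
      refine ⟨t, ht, .cons h w1, ?_, w2, by simp [← hlen]; omega⟩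
      intro x hx hxR
      rcases List.mem_cons.mp (by simpa using hx) with h1 | h2
      · exact absurd (h1 ▸ hxR) ha
      · exact hsupp x h2 hxR

/-- distances from any vertex to any landmark are recovered from
the path labelling together with meta-graph distances: some labelled landmark
`r'` satisfies `δ_ur' + d_M(r',r) = d_G(u,r)`. -/
theorem dist_to_landmark_recovered (G : SimpleGraph V) (hG : G.Connected)
    (R : Set V) (u : V) (hu : u ∉ R) (r : V) (hr : r ∈ R) :
    ∃ r' ∈ R, LEntry G R u r' ∧
      (G.dist u r' : ℕ∞) + dM G R r' r = (G.dist u r : ℕ∞) := by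
  obtain ⟨w0, hw0⟩ := (hG u r).exists_walk_length_eq_dist
  obtain ⟨t, ht, w1, hsupp, w2, hlen⟩ := exists_first_landmark w0 hr
  have d1 : G.dist u t ≤ w1.length := dist_le _
  have d2 : G.dist t r ≤ w2.length := dist_le _
  have tri : G.dist u r ≤ G.dist u t + G.dist t r := hG.dist_triangle
  have e1 : w1.length = G.dist u t := by omega
  have e2 : w2.length = G.dist t r := by omega
  have m : MWalkLen G R t r (G.dist t r) := mwalk_of_shortest hG _ t r w2 e2 e2 ht hr
  have hdM : dM G R t r = (G.dist t r : ℕ∞) := by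
    apply le_antisymm
    · exact sInf_le ⟨G.dist t r, m, rfl⟩
    · refine le_sInf ?_
      rintro x ⟨n, hn, rfl⟩
      exact_mod_cast dist_le_of_mwalk hG hn
  refine ⟨t, ht, ⟨w1, e1, hsupp⟩, ?_⟩
  rw [hdM, ← Nat.cast_add]
  exact_mod_cast by omega
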